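/- Let k > 1 and W ⊂ ℝ⁴ the plane spanned (at parameter v) by u₁ = (1,0,0,0) and u₂ = (0, k sinh v, 1, k cosh v), with J₁(x₁,x₂,x₃,x₄) = (x₃,x₄,x₁,x₂) and g₂ = diag(-1,1,1,-1). Then the tangential endomorphism P of J₁ on W satisfies P² = (1/(1-k²))·Id on W, and both g₂(u₁,u₁) < 0 and g₂(u₂,u₂) < 0, so W is time-like (negative definite). -/
import Mathlib


def J1 (v : Fin 4 → ℝ) : Fin 4 → ℝ := ![v 2, v 3, v 0, v 1]

def g2 (v w : Fin 4 → ℝ) : ℝ := -(v 0 * w 0) + v 1 * w 1 + v 2 * w 2 - v 3 * w 3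

theorem stmt_17 (k : ℝ) (hk : 1 < k) (v : ℝ) (W : Submodule ℝ (Fin 4 → ℝ))
    (hW : W = Submodule.span ℝ
      {![1, 0, 0, 0], ![0, k * Real.sinh v, 1, k * Real.cosh v]})
    (P : (Fin 4 → ℝ) → (Fin 4 → ℝ))
    (hPW : ∀ u ∈ W, P u ∈ W)
    (horth : ∀ u ∈ W, ∀ w ∈ W, g2 (J1 u - P u) w = 0) :
    (∀ u ∈ W, P (P u) = (1 / (1 - k ^ 2)) • u) ∧
    g2 ![1, 0, 0, 0] ![1, 0, 0, 0] < 0 ∧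
    g2 ![0, k * Real.sinh v, 1, k * Real.cosh v]
       ![0, k * Real.sinh v, 1, k * Real.cosh v] < 0 := by
  have hch : Real.cosh v ^ 2 - Real.sinh v ^ 2 = 1 := Real.cosh_sq_sub_sinh_sq v
  have hk2 : (1:ℝ) - k ^ 2 ≠ 0 := by nlinarith
  set e1 : Fin 4 → ℝ := ![1, 0, 0, 0] with he1
  set e2 : Fin 4 → ℝ := ![0, k * Real.sinh v, 1, k * Real.cosh v] with he2
  have he1W : e1 ∈ W := by
    rw [hW]; exact Submodule.subset_span (by left; rfl)
  have he2W : e2 ∈ W := by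
    rw [hW]; exact Submodule.subset_span (by right; rfl)
  have hdecomp : ∀ u ∈ W, u = u 0 • e1 + u 2 • e2 := by
    intro u hu
    rw [hW, Submodule.mem_span_pair] at hu
    obtain ⟨a, b, hab⟩ := hu
    have ha : u 0 = a := by
      rw [← hab]; simp [he1, he2]
    have hb : u 2 = b := by
      rw [← hab]; simp [he1, he2]
    rw [ha, hb, hab]
  have hP : ∀ u ∈ W, P u = u 2 • e1 + (u 0 / (1 - k ^ 2)) • e2 := by
    intro u hu
    have hu1 : u 1 = u 2 * (k * Real.sinh v) := by
      conv_lhs => rw [hdecomp u hu]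
      simp [he1, he2]
    have hu3 : u 3 = u 2 * (k * Real.cosh v) := by
      conv_lhs => rw [hdecomp u hu]
      simp [he1, he2]
    have hp' := hdecomp (P u) (hPW u hu)
    have hp1 : P u 1 = P u 2 * (k * Real.sinh v) := by
      conv_lhs => rw [hp']
      simp [he1, he2]
    have hp3 : P u 3 = P u 2 * (k * Real.cosh v) := by
      conv_lhs => rw [hp']
      simp [he1, he2]
    have h1 := horth u hu e1 he1W
    have h2 := horth u hu e2 he2W
    simp only [g2, J1, he1, he2, Pi.sub_apply, Matrix.cons_val_zero, Matrix.cons_val_one,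
      Matrix.head_cons, Matrix.cons_val_two, Matrix.tail_cons, Matrix.cons_val_three] at h1 h2
    have hPu0 : P u 0 = u 2 := by linarith
    have hPu2 : P u 2 = u 0 / (1 - k ^ 2) := by
      rw [hu1, hu3, hp1, hp3] at h2
      field_simp
      linear_combination (-1 : ℝ) * h2 + P u 2 * k ^ 2 * hch
    rw [hp', hPu0, hPu2]
  constructor
  · intro u hu
    have h1 := hP u hu
    have h2 := hP (P u) (hPW u hu)
    have hpu0 : P u 0 = u 2 := by rw [h1]; simp [he1, he2]
    have hpu2 : P u 2 = u 0 / (1 - k ^ 2) := by rw [h1]; simp [he1, he2]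
    rw [h2, hpu0, hpu2]
    conv_rhs => rw [hdecomp u hu]
    rw [smul_add, smul_smul, smul_smul]
    congr 1 <;> congr 1 <;> field_simp
  constructor
  · simp [g2, he1]
  · have h : g2 e2 e2 = 1 - k ^ 2 := by
      simp only [g2, he2, Matrix.cons_val_zero, Matrix.cons_val_one, Matrix.head_cons,
        Matrix.cons_val_two, Matrix.tail_cons, Matrix.cons_val_three]
      nlinarith [hch]
    rw [h]; nlinarith
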